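/- For an increasing sequence b of positive integers, the IP-Dirichlet set Γ(FS(b)) := {t ∈ ℝ/ℤ : e^{2πi n t} → 1 as min F → ∞ along n = b(F), F finite} equals the group G₁(b) := {t : ∑_{n≥1} ‖b_n t‖ < ∞}. -/

import Mathlib

/-- distance from a real number to the nearest integer -/
noncomputable def nint (x : ℝ) : ℝ := |x - round x|

lemma nint_nonneg (x : ℝ) : 0 ≤ nint x := abs_nonneg _

lemma nint_le_int (x : ℝ) (n : ℤ) : nint x ≤ |x - n| := by
  rw [nint, abs_sub_round_eq_min]
  rcases le_or_gt (n : ℝ) (⌊x⌋ : ℝ) with h | h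
  · refine le_trans (min_le_left _ _) ?_
    have hfr : x - (⌊x⌋ : ℝ) = Int.fract x := Int.self_sub_floor x
    have h0 : Int.fract x ≤ x - n := by linarith
    calc Int.fract x ≤ x - n := h0
      _ ≤ |x - n| := le_abs_self _
  · have hn : (⌊x⌋ : ℝ) + 1 ≤ n := by exact_mod_cast Int.lt_iff_add_one_le.mp (by exact_mod_cast h)
    refine le_trans (min_le_right _ _) ?_
    have hfr : x - (⌊x⌋ : ℝ) = Int.fract x := Int.self_sub_floor x
    have h0 : 1 - Int.fract x ≤ n - x := by linarith
    calc 1 - Int.fract x ≤ n - x := h0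
      _ ≤ |n - x| := le_abs_self _
      _ = |x - n| := abs_sub_comm _ _

lemma nint_add_int (x : ℝ) (n : ℤ) : nint (x + n) = nint x := by
  rw [nint, nint, round_add_intCast]
  push_cast
  ring_nf

lemma nint_add_le (x y : ℝ) : nint (x + y) ≤ nint x + nint y := by
  calc nint (x + y) ≤ |x + y - (round x + round y : ℤ)| := nint_le_int _ _
    _ ≤ |x - round x| + |y - round y| := by
        push_cast
        have : x + y - ((round x : ℝ) + round y) = (x - round x) + (y - round y) := by ring
        rw [this]; exact abs_add_le _ _
    _ = nint x + nint y := rfl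

lemma nint_zero : nint 0 = 0 := by simp [nint]

lemma nint_eq_self {x : ℝ} (h0 : 0 ≤ x) (h1 : x < 1 / 2) : nint x = x := by
  have : round x = 0 := by
    rw [round_eq, Int.floor_eq_zero_iff]
    exact Set.mem_Ico.mpr ⟨by linarith, by linarith⟩
  simp [nint, this, abs_of_nonneg h0]

lemma nint_sum_le (F : Finset ℕ) (f : ℕ → ℝ) :
    nint (∑ j ∈ F, f j) ≤ ∑ j ∈ F, nint (f j) := by
  classical
  induction F using Finset.induction_on with
  | empty => simp [nint_zero]
  | @insert j s hj ih =>
    rw [Finset.sum_insert hj, Finset.sum_insert hj]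
    exact le_trans (nint_add_le _ _) (by linarith)

/-- The IP-Dirichlet set `Γ(FS(b))` equals `G₁(b)`.  (Both sets are invariant under
translation by integers, i.e. they are genuinely subsets of `ℝ/ℤ`.) -/
theorem stmt1 (b : ℕ → ℕ) (hb : StrictMono b) (hbpos : ∀ n, 0 < b n) :
    {t : ℝ | ∀ ε > 0, ∃ K : ℕ, ∀ F : Finset ℕ, ∀ hF : F.Nonempty,
        K ≤ F.min' hF → nint ((∑ j ∈ F, b j : ℕ) * t) < ε}
      = {t : ℝ | Summable (fun n => nint ((b n : ℝ) * t))} := by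
  ext t
  simp only [Set.mem_setOf_eq]
  have hcast : ∀ F : Finset ℕ, ((∑ j ∈ F, b j : ℕ) : ℝ) * t = ∑ j ∈ F, (b j : ℝ) * t := by
    intro F; push_cast; rw [Finset.sum_mul]
  constructor
  · -- hard direction : Γ ⊆ G₁
    intro h
    obtain ⟨K, hK⟩ := h (1/8) (by norm_num)
    -- signed distance
    set y : ℕ → ℝ := fun j => (b j : ℝ) * t - round ((b j : ℝ) * t) with hy
    have hyn : ∀ j, nint ((b j : ℝ) * t) = |y j| := fun j => rfl
    have hsum_eq : ∀ F : Finset ℕ, nint (∑ j ∈ F, y j) = nint ((∑ j ∈ F, b j : ℕ) * t) := by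
      intro F
      rw [hcast]
      have : ∑ j ∈ F, (b j : ℝ) * t
          = (∑ j ∈ F, y j) + ((∑ j ∈ F, round ((b j : ℝ) * t) : ℤ) : ℝ) := by
        push_cast
        rw [← Finset.sum_add_distrib]
        exact Finset.sum_congr rfl fun j _ => by simp [hy]
      rw [this, nint_add_int]
    -- key claim for sets of indices with same-sign y
    have key : ∀ (s : ℝ) (hs : s = 1 ∨ s = -1) (F : Finset ℕ),
        (∀ j ∈ F, K ≤ j ∧ 0 ≤ s * y j) → ∑ j ∈ F, s * y j < 1/8 := by
      intro s hs F
      classical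
      induction F using Finset.induction_on with
      | empty => intro _; simp only [Finset.sum_empty]; norm_num
      | @insert j0 F0 hj ih =>
        intro hmem
        have hIH : ∑ j ∈ F0, s * y j < 1/8 :=
          ih (fun j hjF => hmem j (Finset.mem_insert_of_mem hjF))
        have hnonneg : 0 ≤ ∑ j ∈ F0, s * y j :=
          Finset.sum_nonneg fun j hjF => (hmem j (Finset.mem_insert_of_mem hjF)).2
        -- |y j0| < 1/8 from singleton
        have hj0 := hmem j0 (Finset.mem_insert_self _ _)
        have hsingle : nint ((b j0 : ℝ) * t) < 1/8 := by
          have := hK {j0} ⟨j0, Finset.mem_singleton_self j0⟩ (by simp only [Finset.min'_singleton]; exact hj0.1)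
          simpa using this
        have hyj0 : s * y j0 < 1/8 := by
          have : |y j0| < 1/8 := by rw [← hyn]; exact hsingle
          rcases hs with h1 | h1 <;> rw [h1] <;> cases abs_lt.mp this <;> linarith
        rw [Finset.sum_insert hj]
        by_contra hcon
        push_neg at hcon
        -- the total sum S satisfies 1/8 ≤ S < 1/4 < 1/2
        set S := s * y j0 + ∑ j ∈ F0, s * y j with hS
        have hS1 : 1/8 ≤ S := hcon
        have hS2 : S < 1/2 := by rw [hS]; linarith
        have hS0 : 0 ≤ S := by linarith
        -- but nint S < 1/8
        have hminF : K ≤ (insert j0 F0).min' ⟨j0, Finset.mem_insert_self _ _⟩ := by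
          apply Finset.le_min'
          intro j hjm
          exact (hmem j hjm).1
        have hnint : nint ((∑ j ∈ insert j0 F0, b j : ℕ) * t) < 1/8 :=
          hK _ ⟨j0, Finset.mem_insert_self _ _⟩ hminF
        have hSsum : S = ∑ j ∈ insert j0 F0, s * y j := by
          rw [Finset.sum_insert hj]
        have hsy : ∑ j ∈ insert j0 F0, s * y j = s * ∑ j ∈ insert j0 F0, y j := by
          rw [Finset.mul_sum]
        have hnintS : nint S < 1/8 := by
          have habs : nint S = nint (∑ j ∈ insert j0 F0, y j) := by
            rw [hSsum, hsy]
            rcases hs with h1 | h1 <;> rw [h1]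
            · rw [one_mul]
            · rw [nint, nint]
              have hr : round (-1 * ∑ j ∈ insert j0 F0, y j)
                  = -round (∑ j ∈ insert j0 F0, y j) ∨ True := Or.inr trivial
              -- use minimality both ways to show nint(-x) = nint x
              have even : ∀ x : ℝ, nint (-x) = nint x := by
                intro x
                have h1 : nint (-x) ≤ nint x := by
                  calc nint (-x) ≤ |(-x) - ((-round x : ℤ) : ℝ)| := nint_le_int _ _
                    _ = |x - round x| := by push_cast; rw [← abs_neg]; ring_nf
                    _ = nint x := rfl
                have h2 : nint x ≤ nint (-x) := by
                  calc nint x ≤ |x - ((-round (-x) : ℤ) : ℝ)| := nint_le_int _ _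
                    _ = |(-x) - round (-x)| := by push_cast; rw [← abs_neg]; ring_nf
                    _ = nint (-x) := rfl
                exact le_antisymm h1 h2
              have := even (∑ j ∈ insert j0 F0, y j)
              rw [nint, nint] at this
              simpa [neg_one_mul] using this
          rw [habs, hsum_eq]
          exact hnint
        rw [nint_eq_self hS0 hS2] at hnintS
        linarith
    -- assemble summability
    have hplus : Summable (fun j => if K ≤ j ∧ 0 ≤ y j then y j else 0) := by
      apply summable_of_sum_le (c := 1/8)
      · intro j; simp only [Pi.zero_apply]; split
        · rename_i hcond; exact hcond.2
        · exact le_refl 0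
      · intro u
        classical
        have : ∑ x ∈ u, (if K ≤ x ∧ 0 ≤ y x then y x else 0)
            = ∑ x ∈ u.filter (fun x => K ≤ x ∧ 0 ≤ y x), y x := by
          rw [Finset.sum_filter]
        rw [this]
        have := key 1 (Or.inl rfl) (u.filter (fun x => K ≤ x ∧ 0 ≤ y x)) (by
          intro j hj
          simp only [Finset.mem_filter] at hj
          exact ⟨hj.2.1, by simpa using hj.2.2⟩)
        simp only [one_mul] at this
        linarith
    have hminus : Summable (fun j => if K ≤ j ∧ y j < 0 then -y j else 0) := by
      apply summable_of_sum_le (c := 1/8)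
      · intro j; simp only [Pi.zero_apply]; split
        · rename_i hcond; linarith [hcond.2]
        · exact le_refl 0
      · intro u
        classical
        have : ∑ x ∈ u, (if K ≤ x ∧ y x < 0 then -y x else 0)
            = ∑ x ∈ u.filter (fun x => K ≤ x ∧ y x < 0), -y x := by
          rw [Finset.sum_filter]
        rw [this]
        have := key (-1) (Or.inr rfl) (u.filter (fun x => K ≤ x ∧ y x < 0)) (by
          intro j hj
          simp only [Finset.mem_filter] at hj
          exact ⟨hj.2.1, by nlinarith [hj.2.2]⟩)
        have heq : ∑ j ∈ u.filter (fun x => K ≤ x ∧ y x < 0), (-1 : ℝ) * y j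
            = ∑ j ∈ u.filter (fun x => K ≤ x ∧ y x < 0), -y j := by
          apply Finset.sum_congr rfl; intro j _; ring
        rw [heq] at this
        linarith
    have htot : Summable (fun j => (if K ≤ j ∧ 0 ≤ y j then y j else 0)
        + (if K ≤ j ∧ y j < 0 then -y j else 0)) := hplus.add hminus
    rw [← summable_nat_add_iff K]
    apply Summable.congr (htot.comp_injective (add_right_injective K) :
      Summable (fun n => _))
    intro n
    have hKn : K ≤ n + K := by omega
    simp only [Function.comp_apply]
    rw [Nat.add_comm K n]
    show (if K ≤ n + K ∧ 0 ≤ y (n+K) then y (n+K) else 0)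
        + (if K ≤ n + K ∧ y (n+K) < 0 then -y (n+K) else 0) = nint ((b (n+K) : ℝ) * t)
    rw [hyn]
    rcases le_or_gt 0 (y (n+K)) with hy0 | hy0
    · rw [if_pos ⟨hKn, hy0⟩, if_neg (by intro h; linarith [h.2]), abs_of_nonneg hy0, add_zero]
    · rw [if_neg (by intro h; linarith [h.2]), if_pos ⟨hKn, hy0⟩, abs_of_neg hy0, zero_add]
  · -- easy direction : G₁ ⊆ Γ
    intro h ε hε
    obtain ⟨s, hs⟩ := summable_iff_vanishing.mp h (Metric.ball 0 ε) (Metric.ball_mem_nhds 0 hε)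
    classical
    refine ⟨s.sup id + 1, fun F hF hmin => ?_⟩
    have hdisj : Disjoint F s := by
      rw [Finset.disjoint_left]
      intro a haF has
      have h1 : a ≤ s.sup id := Finset.le_sup (f := id) has
      have h2 : s.sup id + 1 ≤ a := le_trans hmin (F.min'_le a haF)
      omega
    have := hs F hdisj
    rw [Metric.mem_ball, Real.dist_eq, sub_zero] at this
    have hle : nint ((∑ j ∈ F, b j : ℕ) * t) ≤ ∑ j ∈ F, nint ((b j : ℝ) * t) := by
      rw [hcast]; exact nint_sum_le F _
    calc nint ((∑ j ∈ F, b j : ℕ) * t) ≤ ∑ j ∈ F, nint ((b j : ℝ) * t) := hle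
      _ ≤ |∑ j ∈ F, nint ((b j : ℝ) * t)| := le_abs_self _
      _ < ε := this
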